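/- Let G be the directed acyclic graph with two vertices and a single edge A→B, with both state spaces equal to {0,1}, and let a ≠ a' be the two values of A. Then there exist two causal structures in the multiple worlds model (MWM) for G having identical observed joint distributions of (A, B) but different joint distributions of the pair of potential outcomes (B(a), B(a')); similarly, there exist two such structures with identical observed joint distributions of (A, B) but different joint distributions of (B(a), B). Consequently, p(B(a), B(a')) and p(B(a), B) are not identified from p(A, B) under the MWM for G. -/

import Mathlib

open scoped Classical
open MeasureTheory

namespace CausalHierarchy

variable {V : Type}

/-- A directed path in a directed graph with edge relation `edge`:
a nonempty list of vertices in which each consecutive pair is joined by an edge. -/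
structure DiPath (edge : V → V → Prop) : Type where
  verts : List V
  ne : verts ≠ []
  chain : verts.Chain' edge

namespace DiPath

variable {edge : V → V → Prop}

/-- The source (first vertex) of a directed path. -/
def src (p : DiPath edge) : V := p.verts.head p.ne

/-- The sink (last vertex) of a directed path. -/
def sink (p : DiPath edge) : V := p.verts.getLast p.ne

/-- The second vertex of a directed path (junk value for single-vertex paths). -/
def snd2 (p : DiPath edge) : V := p.verts.tail.headD p.src

/-- The first edge of a directed path, as an ordered pair of vertices. -/
def firstEdge (p : DiPath edge) : V × V := (p.src, p.snd2)

/-- `q` is a (contiguous) subpath of `p`. -/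
def Subpath (q p : DiPath edge) : Prop := ∃ l r, p.verts = l ++ q.verts ++ r

/-- `q` is a prefix subpath of `p`. -/
def IsPrefix (q p : DiPath edge) : Prop := q.verts <+: p.verts

/-- `q` is a suffix subpath of `p`. -/
def IsSuffix (q p : DiPath edge) : Prop := q.verts <:+ p.verts

end DiPath

/-- A directed graph is acyclic if its transitive closure is irreflexive. -/
def Acyclic (edge : V → V → Prop) : Prop := Irreflexive (Relation.TransGen edge)

theorem Acyclic.wf [Finite V] {edge : V → V → Prop} (h : Acyclic edge) :
    WellFounded (Relation.TransGen edge) := by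
  have h1 : IsIrrefl V (Relation.TransGen edge) := ⟨h⟩
  have h2 : IsTrans V (Relation.TransGen edge) := ⟨fun _ _ _ => Relation.TransGen.trans⟩
  exact Finite.wellFounded_of_trans_of_irrefl _

/-- A set of directed paths is proper if no path in it is a prefix subpath of another. -/
def Proper {edge : V → V → Prop} (A : Set (DiPath edge)) : Prop :=
  ∀ p ∈ A, ∀ q ∈ A, p.IsPrefix q → p = q

/-- `rel edge Y A`: the directed paths relevant for `Y` given `A`: paths with sink in `Y`
such that no member of `A` is a subpath, except possibly a prefix subpath. -/
def rel (edge : V → V → Prop) (Y : Set V) (A : Set (DiPath edge)) : Set (DiPath edge) :=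
  {α | α.sink ∈ Y ∧ ∀ β ∈ A, β.Subpath α → β.IsPrefix α}

/-- A path `α` is live for `Y` given `A` if some relevant path has it as a prefix. -/
def Live (edge : V → V → Prop) (Y : Set V) (A : Set (DiPath edge)) (α : DiPath edge) : Prop :=
  ∃ p ∈ rel edge Y A, α.IsPrefix p

/-- The set of members of `A` live for `Y` given `A`. -/
def liveSub (edge : V → V → Prop) (Y : Set V) (A : Set (DiPath edge)) : Set (DiPath edge) :=
  {α ∈ A | Live edge Y A α}

/-- `A` is live for `Y` if every member of `A` is live for `Y` given `A`. -/
def LiveSet (edge : V → V → Prop) (Y : Set V) (A : Set (DiPath edge)) : Prop :=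
  ∀ α ∈ A, Live edge Y A α

/-- The funnel operator for the edge `(w,y)`: paths of the form `(a,…,w,y)` are truncated
to `(a,…,w)`, paths containing `w` not ending with the edge `(w,y)` are removed, and other
paths are kept unchanged. -/
def funnel {edge : V → V → Prop} (w y : V) (A : Set (DiPath edge)) : Set (DiPath edge) :=
  {q | (q ∈ A ∧ w ∉ q.verts) ∨ (q.sink = w ∧ ∃ p ∈ A, p.verts = q.verts ++ [y])}

/-- `alphaSet edge A Y`: all directed paths (with at least one edge) with source in `A`,
sink in `A ∪ Y`, and not intersecting `A ∪ Y` except at the source and sink. -/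
def alphaSet (edge : V → V → Prop) (A Y : Set V) : Set (DiPath edge) :=
  {p | 2 ≤ p.verts.length ∧ p.src ∈ A ∧ p.sink ∈ A ∪ Y ∧
       ∀ l₁ v l₂, p.verts = l₁ ++ v :: l₂ → v ∈ A ∪ Y → l₁ = [] ∨ l₂ = []}

/-- The set of first edges of the (nontrivial) paths in `A`. -/
def firstEdges {edge : V → V → Prop} (A : Set (DiPath edge)) : Set (V × V) :=
  {e | ∃ p ∈ A, 2 ≤ p.verts.length ∧ e = p.firstEdge}

/-- A causal structure for the graph `(V, edge)` with state spaces `X`: a probability space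
together with, for each vertex `v` and assignment of values to its parents, a random
variable (the one-step-ahead potential outcome).  The function `f v` takes a full tuple of
values but depends only on the coordinates of parents of `v`. -/
structure CausalStructure (V : Type) (edge : V → V → Prop) (X : V → Type) : Type 1 where
  Ω : Type
  m : MeasurableSpace Ω
  μ : @MeasureTheory.Measure Ω m
  prob : μ Set.univ = 1
  f : (v : V) → ((w : V) → X w) → Ω → X v
  localDep : ∀ v x y, (∀ w, edge w v → x w = y w) → f v x = f v y

variable {X : V → Type}

/-- The natural (observed) variable of each vertex, obtained by recursive substitution with
no intervention. -/
noncomputable def observed [Finite V] {edge : V → V → Prop} [∀ v, Nonempty (X v)]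
    (hG : Acyclic edge) (C : CausalStructure V edge X) (v : V) : C.Ω → X v :=
  hG.wf.fix (C := fun u => C.Ω → X u)
    (fun v IH ω => C.f v (fun w =>
      if h : Relation.TransGen edge w v then IH w h ω else Classical.arbitrary (X w)) ω) v

/-- The response to the node intervention setting the vertices of `A` to the values `a`,
defined by recursive substitution. -/
noncomputable def nodeResp [Finite V] {edge : V → V → Prop} [∀ v, Nonempty (X v)]
    (hG : Acyclic edge) (C : CausalStructure V edge X)
    (A : Set V) (a : ∀ u, X u) (v : V) : C.Ω → X v :=
  hG.wf.fix (C := fun u => C.Ω → X u)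
    (fun v IH ω => C.f v (fun w =>
      if w ∈ A then a w
      else if h : Relation.TransGen edge w v then IH w h ω
      else Classical.arbitrary (X w)) ω) v

/-- The response to the edge intervention assigning, to each edge `e ∈ E`, the value
`aE e e.1` (a value in the state space of the source of `e`), defined by recursive
substitution. -/
noncomputable def edgeResp [Finite V] {edge : V → V → Prop} [∀ v, Nonempty (X v)]
    (hG : Acyclic edge) (C : CausalStructure V edge X)
    (E : Set (V × V)) (aE : V × V → ∀ u, X u) (v : V) : C.Ω → X v :=
  hG.wf.fix (C := fun u => C.Ω → X u)
    (fun v IH ω => C.f v (fun w =>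
      if (w, v) ∈ E then aE (w, v) w
      else if h : Relation.TransGen edge w v then IH w h ω
      else Classical.arbitrary (X w)) ω) v

/-- The funneled path assignment: the truncation of a path of `A` by the funnel operator for
`(w,y)` receives the value assigned to the original path; other paths keep their values. -/
noncomputable def funnelAssign {edge : V → V → Prop} (w y : V) (A : Set (DiPath edge))
    (a : DiPath edge → ∀ u, X u) (q : DiPath edge) : ∀ u, X u :=
  if h : q.sink = w ∧ ∃ p ∈ A, p.verts = q.verts ++ [y] then a h.2.choose else a q

/-- The response to the path intervention assigning, to each directed path `p ∈ A`, the
value `a p p.src` (a value in the state space of the source of `p`), defined by recursive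
substitution via the funnel operator. -/
noncomputable def pathResp [Finite V] {edge : V → V → Prop} [∀ v, Nonempty (X v)]
    (hG : Acyclic edge) (C : CausalStructure V edge X)
    (A : Set (DiPath edge)) (a : DiPath edge → ∀ u, X u) (v : V) : C.Ω → X v :=
  hG.wf.fix (C := fun u => Set (DiPath edge) → (DiPath edge → ∀ z, X z) → C.Ω → X u)
    (fun v IH A a ω => C.f v (fun w =>
      if h : ∃ p ∈ A, p.verts = [w, v] then a h.choose w
      else if hw : Relation.TransGen edge w v then
        IH w hw (funnel w v A) (funnelAssign w v A a) ω
      else Classical.arbitrary (X w)) ω) v A a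

/-- The response to the path intervention in which the paths of `Astar ⊆ A` are assigned
the constant values `a`, and the paths of `A ∖ Astar` are assigned the natural values of
their sources, defined by recursive substitution via the funnel operator. -/
noncomputable def pathRespNat [Finite V] {edge : V → V → Prop} [∀ v, Nonempty (X v)]
    (hG : Acyclic edge) (C : CausalStructure V edge X)
    (A Astar : Set (DiPath edge)) (a : DiPath edge → ∀ u, X u) (v : V) : C.Ω → X v :=
  hG.wf.fix (C := fun u =>
      Set (DiPath edge) → Set (DiPath edge) → (DiPath edge → ∀ z, X z) → C.Ω → X u)
    (fun v IH A Astar a ω => C.f v (fun w =>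
      if h : ∃ p ∈ A, p.verts = [w, v] then
        (if h.choose ∈ Astar then a h.choose w else observed hG C w ω)
      else if hw : Relation.TransGen edge w v then
        IH w hw (funnel w v A) (funnel w v Astar) (funnelAssign w v A a) ω
      else Classical.arbitrary (X w)) ω) v A Astar a

/-- The observed distribution `p(𝐕)`, as a probability mass function. -/
noncomputable def obsDist [Finite V] {edge : V → V → Prop} [∀ v, Nonempty (X v)]
    (hG : Acyclic edge) (C : CausalStructure V edge X) : (∀ v, X v) → ENNReal :=
  fun s => C.μ {ω | ∀ v, observed hG C v ω = s v}

/-- The single world model (Robins' FFRCISTG model): for every joint value assignment `x`,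
the one-step-ahead variables `{V(x_{pa(V)}) : V ∈ 𝐕}` are mutually independent. -/
def SWM {edge : V → V → Prop} (C : CausalStructure V edge X) : Prop :=
  ∀ x : ∀ u, X u, ∀ (S : Finset V) (s : ∀ u, X u),
    C.μ {ω | ∀ v ∈ S, C.f v x ω = s v} = ∏ v ∈ S, C.μ {ω | C.f v x ω = s v}

/-- The multiple worlds model (Pearl's NPSEM-IE): the families
`{V(x) : x an assignment to pa(V)}`, one family per vertex, are mutually independent. -/
def MWM {edge : V → V → Prop} (C : CausalStructure V edge X) : Prop :=
  ∀ (S : Finset V) (g : ∀ v, ((∀ u, X u) → X v)),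
    C.μ {ω | ∀ v ∈ S, (fun x => C.f v x ω) = g v} =
      ∏ v ∈ S, C.μ {ω | (fun x => C.f v x ω) = g v}

/-- The conditional probability `p(val | values c of the parents of v)` of the observed
distribution. -/
noncomputable def condProb [Finite V] {edge : V → V → Prop} [∀ v, Nonempty (X v)]
    (hG : Acyclic edge) (C : CausalStructure V edge X)
    (v : V) (val : X v) (c : ∀ u, X u) : ENNReal :=
  C.μ {ω | observed hG C v ω = val ∧ ∀ w, edge w v → observed hG C w ω = c w} /
    C.μ {ω | ∀ w, edge w v → observed hG C w ω = c w}

/-- A response distribution `R` is identified from `p(𝐕)` under the model `M` if any two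
causal structures in `M` with the same observed distribution give it the same value. -/
def Identified [Finite V] {edge : V → V → Prop} [∀ v, Nonempty (X v)] (hG : Acyclic edge)
    (M : CausalStructure V edge X → Prop)
    (R : CausalStructure V edge X → (∀ v, X v) → ENNReal) : Prop :=
  ∀ C₁ C₂, M C₁ → M C₂ → obsDist hG C₁ = obsDist hG C₂ → R C₁ = R C₂

/-- Paths relevant for `Y` given a set of edges `E`: sink in `Y` and no edge of `E` occurs
in the path except possibly as the first edge. -/
def relE (edge : V → V → Prop) (Y : Set V) (E : Set (V × V)) : Set (DiPath edge) :=
  {p | p.sink ∈ Y ∧ ∀ l₁ w v l₂, p.verts = l₁ ++ w :: v :: l₂ → (w, v) ∈ E → l₁ = []}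

/-- A set of edges is live for `Y` if each of its edges begins some relevant path. -/
def LiveE (edge : V → V → Prop) (Y : Set V) (E : Set (V × V)) : Prop :=
  ∀ e ∈ E, ∃ p ∈ relE edge Y E, ∃ l, p.verts = e.1 :: e.2 :: l

/-- A set of edges live for `Y` is consistent for `Y` if for every vertex `a`, the set of
first edges of relevant paths with source `a` is contained in `E` or disjoint from `E`. -/
def ConsistentE (edge : V → V → Prop) (Y : Set V) (E : Set (V × V)) : Prop :=
  ∀ a : V, (∀ p ∈ relE edge Y E, ∀ b l, p.verts = a :: b :: l → (a, b) ∈ E) ∨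
           (∀ p ∈ relE edge Y E, ∀ b l, p.verts = a :: b :: l → (a, b) ∉ E)

/-- An edge intervention is node consistent for `Y` if its edge set is live and consistent
for `Y` and all edges sharing a source are assigned the same value. -/
def NodeConsistent {X : V → Type} (edge : V → V → Prop) (Y : Set V) (E : Set (V × V))
    (aE : V × V → ∀ u, X u) : Prop :=
  LiveE edge Y E ∧ ConsistentE edge Y E ∧
    ∀ e ∈ E, ∀ e' ∈ E, e.1 = e'.1 → aE e e.1 = aE e' e.1

/-- A proper set of paths live for `Y` is consistent for `Y` if whenever the first edge of
some path of `A` occurs in a relevant path `β`, it is the first edge of a prefix subpath of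
`β` belonging to `A`. -/
def ConsistentP (edge : V → V → Prop) (Y : Set V) (A : Set (DiPath edge)) : Prop :=
  ∀ a b : V, (∃ p ∈ A, ∃ l, p.verts = a :: b :: l) →
    ∀ β ∈ rel edge Y A, (∃ l₁ l₂, β.verts = l₁ ++ a :: b :: l₂) →
      ∃ q ∈ A, q.IsPrefix β ∧ ∃ l', q.verts = a :: b :: l'

/-- A path intervention is edge consistent for `Y` if its path set is live and consistent
for `Y` and all paths sharing the same first edge are assigned the same value. -/
def EdgeConsistentP {X : V → Type} (edge : V → V → Prop) (Y : Set V)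
    (A : Set (DiPath edge)) (a : DiPath edge → ∀ u, X u) : Prop :=
  LiveSet edge Y A ∧ ConsistentP edge Y A ∧
    ∀ p ∈ A, ∀ q ∈ A, p.firstEdge = q.firstEdge → a p p.src = a q p.src

/-- A directed path of a graph is a directed path of any supergraph. -/
def liftPath {edge edge' : V → V → Prop} (h : ∀ a b, edge a b → edge' a b)
    (p : DiPath edge) : DiPath edge' :=
  ⟨p.verts, p.ne, p.chain.imp (fun {a b} hab => h a b hab)⟩


/-- The graph with vertices `A = 0`, `B = 1` and the single edge `A → B`. -/
def edgeAB : Fin 2 → Fin 2 → Prop := fun i j => i = 0 ∧ j = 1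

theorem edgeAB_acyclic : Acyclic edgeAB := by
  intro x hx
  have h0 : ∀ y, Relation.TransGen edgeAB x y → x = 0 := by
    intro y hy
    induction hy with
    | single h => exact h.1
    | tail _ _ ih => exact ih
  have h1 : x = 1 := by
    cases hx with
    | single h => exact h.2
    | tail _ h => exact h.2
  rw [h0 x hx] at h1
  exact absurd h1 (by decide)

/-- The joint distribution of the pair of potential outcomes `(B(a), B(a'))`. -/
noncomputable def jointBB (a a' : Fin 2)
    (C : CausalStructure (Fin 2) edgeAB (fun _ => Fin 2)) : Fin 2 × Fin 2 → ENNReal :=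
  fun st => C.μ {ω | nodeResp edgeAB_acyclic C {0} (fun _ => a) 1 ω = st.1 ∧
    nodeResp edgeAB_acyclic C {0} (fun _ => a') 1 ω = st.2}

/-- The joint distribution of `(B(a), B)` where `B` is the natural variable. -/
noncomputable def jointBnat (a : Fin 2)
    (C : CausalStructure (Fin 2) edgeAB (fun _ => Fin 2)) : Fin 2 × Fin 2 → ENNReal :=
  fun st => C.μ {ω | nodeResp edgeAB_acyclic C {0} (fun _ => a) 1 ω = st.1 ∧
    observed edgeAB_acyclic C 1 ω = st.2}


noncomputable def μ4 : @MeasureTheory.Measure (Fin 2 × Fin 2) ⊤ :=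
  (4 : ENNReal)⁻¹ • (@Measure.dirac (Fin 2 × Fin 2) ⊤ (0, 0) +
    @Measure.dirac (Fin 2 × Fin 2) ⊤ (0, 1) +
    @Measure.dirac (Fin 2 × Fin 2) ⊤ (1, 0) +
    @Measure.dirac (Fin 2 × Fin 2) ⊤ (1, 1))

lemma μ4_apply (s : Set (Fin 2 × Fin 2)) :
    μ4 s = 4⁻¹ * ((if ((0 : Fin 2), (0 : Fin 2)) ∈ s then 1 else 0) +
      (if ((0 : Fin 2), (1 : Fin 2)) ∈ s then 1 else 0) +
      (if ((1 : Fin 2), (0 : Fin 2)) ∈ s then 1 else 0) +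
      (if ((1 : Fin 2), (1 : Fin 2)) ∈ s then 1 else 0)) := by
  have hm : MeasurableSet[⊤] s := MeasurableSpace.measurableSet_top
  have hd : ∀ x : Fin 2 × Fin 2, (@Measure.dirac (Fin 2 × Fin 2) ⊤ x) s
      = if x ∈ s then 1 else 0 := by
    intro x
    rw [@Measure.dirac_apply' (Fin 2 × Fin 2) ⊤ _ _ hm]
    simp [Set.indicator_apply]
  simp only [μ4, Measure.smul_apply, Measure.add_apply, smul_eq_mul, hd]

lemma enn4 : (4:ENNReal)⁻¹ * 4 = 1 := ENNReal.inv_mul_cancel (by norm_num) (by norm_num)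

lemma enn2 : (4:ENNReal)⁻¹ * 2 * (4⁻¹ * 2) = 4⁻¹ := by
  have h : (4:ENNReal)⁻¹ * 2 * (4⁻¹ * 2) = 4⁻¹ * (4⁻¹ * 4) := by ring
  rw [h, enn4, mul_one]

lemma μ4_univ : μ4 Set.univ = 1 := by
  rw [μ4_apply]
  simp only [Set.mem_univ, if_true]
  rw [show (1+1+1+1 : ENNReal) = 4 by norm_num, enn4]

lemma μ4_indep (p q : Fin 2 → Prop) :
    μ4 {ω : Fin 2 × Fin 2 | p ω.1 ∧ q ω.2} = μ4 {ω | p ω.1} * μ4 {ω | q ω.2} := by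
  rw [μ4_apply, μ4_apply, μ4_apply]
  simp only [Set.mem_setOf_eq]
  by_cases h1 : p 0 <;> by_cases h2 : p 1 <;> by_cases h3 : q 0 <;> by_cases h4 : q 1 <;>
    simp [h1, h2, h3, h4] <;> norm_num <;> simp [enn4, enn2]

lemma μ4_ne_zero (s : Set (Fin 2 × Fin 2)) (x : Fin 2 × Fin 2) (hx : x ∈ s) : μ4 s ≠ 0 := by
  rw [μ4_apply]
  have hx4 : ∀ y : Fin 2 × Fin 2, y = (0,0) ∨ y = (0,1) ∨ y = (1,0) ∨ y = (1,1) := by decide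
  have hinv : (4:ENNReal)⁻¹ ≠ 0 := by norm_num
  rcases hx4 x with rfl | rfl | rfl | rfl <;>
    · simp only [if_pos hx]
      intro h
      rcases mul_eq_zero.mp h with h' | h'
      · exact hinv h'
      · revert h'
        split_ifs <;> simp

/-- Structure 1: B(x) = x(A) + ω.2 (xor noise). -/
noncomputable def Cxor : CausalStructure (Fin 2) edgeAB (fun _ => Fin 2) where
  Ω := Fin 2 × Fin 2
  m := ⊤
  μ := μ4
  prob := μ4_univ
  f := fun v x ω => if v = 0 then ω.1 else x 0 + ω.2
  localDep := by
    intro v x y h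
    by_cases hv : v = (0 : Fin 2)
    · simp [hv]
    · have hv1 : v = 1 := by omega
      have h0 : x 0 = y 0 := h 0 ⟨rfl, hv1⟩
      simp [hv, h0]

/-- Structure 2: B(x) = ω.2 (pure noise, same marginals). -/
noncomputable def Cid : CausalStructure (Fin 2) edgeAB (fun _ => Fin 2) where
  Ω := Fin 2 × Fin 2
  m := ⊤
  μ := μ4
  prob := μ4_univ
  f := fun v x ω => if v = 0 then ω.1 else ω.2
  localDep := by
    intro v x y h
    by_cases hv : v = (0 : Fin 2) <;> simp [hv]

lemma trans01 : Relation.TransGen edgeAB 0 1 := Relation.TransGen.single ⟨rfl, rfl⟩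

lemma observed_zero (C : CausalStructure (Fin 2) edgeAB (fun _ => Fin 2))
    (z : (w : Fin 2) → Fin 2) (ω : C.Ω) :
    observed edgeAB_acyclic C 0 ω = C.f 0 z ω := by
  unfold observed
  rw [WellFounded.fix_eq]
  exact congrFun (C.localDep 0 _ z fun w hw => absurd hw.2 (by decide)) ω

lemma observed_one (C : CausalStructure (Fin 2) edgeAB (fun _ => Fin 2)) (ω : C.Ω) :
    observed edgeAB_acyclic C 1 ω = C.f 1 (fun _ => observed edgeAB_acyclic C 0 ω) ω := by
  have h : observed edgeAB_acyclic C 1 ω = C.f 1 (fun w =>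
      if h : Relation.TransGen edgeAB w 1 then observed edgeAB_acyclic C w ω
      else Classical.arbitrary (Fin 2)) ω := by
    unfold observed
    rw [WellFounded.fix_eq]
  rw [h]
  refine congrFun (C.localDep 1 _ _ fun w hw => ?_) ω
  obtain ⟨rfl, -⟩ := hw
  rw [dif_pos trans01]

lemma nodeResp_one (C : CausalStructure (Fin 2) edgeAB (fun _ => Fin 2))
    (a : ∀ _ : Fin 2, Fin 2) (ω : C.Ω) :
    nodeResp edgeAB_acyclic C {0} a 1 ω = C.f 1 (fun _ => a 0) ω := by
  unfold nodeResp
  rw [WellFounded.fix_eq]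
  refine congrFun (C.localDep 1 _ _ fun w hw => ?_) ω
  obtain ⟨rfl, -⟩ := hw
  simp



lemma Cxor_f (v : Fin 2) (x : ∀ _ : Fin 2, Fin 2) (ω : Fin 2 × Fin 2) :
    Cxor.f v x ω = if v = 0 then ω.1 else x 0 + ω.2 := rfl

lemma Cid_f (v : Fin 2) (x : ∀ _ : Fin 2, Fin 2) (ω : Fin 2 × Fin 2) :
    Cid.f v x ω = if v = 0 then ω.1 else ω.2 := rfl

lemma Cxor_obs0 (ω : Fin 2 × Fin 2) : observed edgeAB_acyclic Cxor 0 ω = ω.1 := by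
  rw [observed_zero Cxor (fun _ => 0) ω, Cxor_f]; simp

lemma Cxor_obs1 (ω : Fin 2 × Fin 2) :
    observed edgeAB_acyclic Cxor 1 ω = ω.1 + ω.2 := by
  rw [observed_one Cxor ω, Cxor_f]
  simp [Cxor_obs0]

lemma Cid_obs0 (ω : Fin 2 × Fin 2) : observed edgeAB_acyclic Cid 0 ω = ω.1 := by
  rw [observed_zero Cid (fun _ => 0) ω, Cid_f]; simp

lemma Cid_obs1 (ω : Fin 2 × Fin 2) : observed edgeAB_acyclic Cid 1 ω = ω.2 := by
  rw [observed_one Cid ω, Cid_f]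
  simp

lemma Cxor_node (a : Fin 2) (ω : Fin 2 × Fin 2) :
    nodeResp edgeAB_acyclic Cxor {0} (fun _ => a) 1 ω = a + ω.2 := by
  rw [nodeResp_one Cxor (fun _ => a) ω, Cxor_f]; simp

lemma Cid_node (a : Fin 2) (ω : Fin 2 × Fin 2) :
    nodeResp edgeAB_acyclic Cid {0} (fun _ => a) 1 ω = ω.2 := by
  rw [nodeResp_one Cid (fun _ => a) ω, Cid_f]; simp

lemma finsetFin2 : ∀ T : Finset (Fin 2), T = ∅ ∨ T = {0} ∨ T = {1} ∨ T = {0, 1} := by decide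

lemma Cxor_MWM : MWM Cxor := by
  intro S g
  show μ4 {ω : Fin 2 × Fin 2 | ∀ v ∈ S, (fun x => Cxor.f v x ω) = g v}
      = ∏ v ∈ S, μ4 {ω : Fin 2 × Fin 2 | (fun x => Cxor.f v x ω) = g v}
  have f0eq : ∀ ω : Fin 2 × Fin 2,
      (fun x : ∀ _ : Fin 2, Fin 2 => Cxor.f 0 x ω) = (fun _ => ω.1) :=
    fun ω => funext fun x => by simp [Cxor_f]
  have f1eq : ∀ ω : Fin 2 × Fin 2,
      (fun x : ∀ _ : Fin 2, Fin 2 => Cxor.f 1 x ω) = (fun x => x 0 + ω.2) :=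
    fun ω => funext fun x => by simp [Cxor_f]
  have E0 : {ω : Fin 2 × Fin 2 | (fun x => Cxor.f 0 x ω) = g 0}
      = {ω : Fin 2 × Fin 2 | (fun _ : ∀ _ : Fin 2, Fin 2 => ω.1) = g 0} := by
    ext ω; rw [Set.mem_setOf_eq, Set.mem_setOf_eq, f0eq ω]
  have E1 : {ω : Fin 2 × Fin 2 | (fun x => Cxor.f 1 x ω) = g 1}
      = {ω : Fin 2 × Fin 2 | (fun x : ∀ _ : Fin 2, Fin 2 => x 0 + ω.2) = g 1} := by
    ext ω; rw [Set.mem_setOf_eq, Set.mem_setOf_eq, f1eq ω]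
  rcases finsetFin2 S with rfl | rfl | rfl | rfl
  · simp only [Finset.notMem_empty, false_implies, implies_true, Set.setOf_true,
      Finset.prod_empty]
    exact μ4_univ
  · simp
  · simp
  · have hset : {ω : Fin 2 × Fin 2 | ∀ v ∈ ({0, 1} : Finset (Fin 2)),
        (fun x => Cxor.f v x ω) = g v}
        = {ω : Fin 2 × Fin 2 | ((fun _ : ∀ _ : Fin 2, Fin 2 => ω.1) = g 0)
            ∧ ((fun x : ∀ _ : Fin 2, Fin 2 => x 0 + ω.2) = g 1)} := by
      ext ω
      simp only [Set.mem_setOf_eq, Finset.mem_insert, Finset.mem_singleton,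
        forall_eq_or_imp, forall_eq]
      rw [f0eq ω, f1eq ω]
    rw [hset, Finset.prod_insert (by decide), Finset.prod_singleton, E0, E1]
    exact μ4_indep (fun c => (fun _ : ∀ _ : Fin 2, Fin 2 => c) = g 0)
      (fun d => (fun x : ∀ _ : Fin 2, Fin 2 => x 0 + d) = g 1)

lemma Cid_MWM : MWM Cid := by
  intro S g
  show μ4 {ω : Fin 2 × Fin 2 | ∀ v ∈ S, (fun x => Cid.f v x ω) = g v}
      = ∏ v ∈ S, μ4 {ω : Fin 2 × Fin 2 | (fun x => Cid.f v x ω) = g v}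
  have f0eq : ∀ ω : Fin 2 × Fin 2,
      (fun x : ∀ _ : Fin 2, Fin 2 => Cid.f 0 x ω) = (fun _ => ω.1) :=
    fun ω => funext fun x => by simp [Cid_f]
  have f1eq : ∀ ω : Fin 2 × Fin 2,
      (fun x : ∀ _ : Fin 2, Fin 2 => Cid.f 1 x ω) = (fun _ => ω.2) :=
    fun ω => funext fun x => by simp [Cid_f]
  have E0 : {ω : Fin 2 × Fin 2 | (fun x => Cid.f 0 x ω) = g 0}
      = {ω : Fin 2 × Fin 2 | (fun _ : ∀ _ : Fin 2, Fin 2 => ω.1) = g 0} := by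
    ext ω; rw [Set.mem_setOf_eq, Set.mem_setOf_eq, f0eq ω]
  have E1 : {ω : Fin 2 × Fin 2 | (fun x => Cid.f 1 x ω) = g 1}
      = {ω : Fin 2 × Fin 2 | (fun _ : ∀ _ : Fin 2, Fin 2 => ω.2) = g 1} := by
    ext ω; rw [Set.mem_setOf_eq, Set.mem_setOf_eq, f1eq ω]
  rcases finsetFin2 S with rfl | rfl | rfl | rfl
  · simp only [Finset.notMem_empty, false_implies, implies_true, Set.setOf_true,
      Finset.prod_empty]
    exact μ4_univ
  · simp
  · simp
  · have hset : {ω : Fin 2 × Fin 2 | ∀ v ∈ ({0, 1} : Finset (Fin 2)),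
        (fun x => Cid.f v x ω) = g v}
        = {ω : Fin 2 × Fin 2 | ((fun _ : ∀ _ : Fin 2, Fin 2 => ω.1) = g 0)
            ∧ ((fun _ : ∀ _ : Fin 2, Fin 2 => ω.2) = g 1)} := by
      ext ω
      simp only [Set.mem_setOf_eq, Finset.mem_insert, Finset.mem_singleton,
        forall_eq_or_imp, forall_eq]
      rw [f0eq ω, f1eq ω]
    rw [hset, Finset.prod_insert (by decide), Finset.prod_singleton, E0, E1]
    exact μ4_indep (fun c => (fun _ : ∀ _ : Fin 2, Fin 2 => c) = g 0)
      (fun d => (fun _ : ∀ _ : Fin 2, Fin 2 => d) = g 1)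

lemma obs_dist_eq : obsDist edgeAB_acyclic Cxor = obsDist edgeAB_acyclic Cid := by
  funext s
  show μ4 {ω : Fin 2 × Fin 2 | ∀ v : Fin 2, observed edgeAB_acyclic Cxor v ω = s v}
      = μ4 {ω : Fin 2 × Fin 2 | ∀ v : Fin 2, observed edgeAB_acyclic Cid v ω = s v}
  have h1 : {ω : Fin 2 × Fin 2 | ∀ v : Fin 2, observed edgeAB_acyclic Cxor v ω = s v}
      = {ω : Fin 2 × Fin 2 | ω.1 = s 0 ∧ ω.1 + ω.2 = s 1} := by
    ext ω
    simp only [Set.mem_setOf_eq, Fin.forall_fin_two, Cxor_obs0, Cxor_obs1]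
  have h2 : {ω : Fin 2 × Fin 2 | ∀ v : Fin 2, observed edgeAB_acyclic Cid v ω = s v}
      = {ω : Fin 2 × Fin 2 | ω.1 = s 0 ∧ ω.2 = s 1} := by
    ext ω
    simp only [Set.mem_setOf_eq, Fin.forall_fin_two, Cid_obs0, Cid_obs1]
  rw [h1, h2, μ4_apply, μ4_apply]
  have hc : ∀ c : Fin 2, c = 0 ∨ c = 1 := by decide
  rcases hc (s 0) with h0 | h0 <;> rcases hc (s 1) with h1' | h1' <;>
    simp (config := { decide := true }) [h0, h1', Set.mem_setOf_eq]

lemma Cxor_jointBB (a a' : Fin 2) (hne : a ≠ a') : jointBB a a' Cxor (a, a) = 0 := by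
  show μ4 {ω : Fin 2 × Fin 2 | nodeResp edgeAB_acyclic Cxor {0} (fun _ => a) 1 ω = a
      ∧ nodeResp edgeAB_acyclic Cxor {0} (fun _ => a') 1 ω = a} = 0
  have hempty : {ω : Fin 2 × Fin 2 | nodeResp edgeAB_acyclic Cxor {0} (fun _ => a) 1 ω = a
      ∧ nodeResp edgeAB_acyclic Cxor {0} (fun _ => a') 1 ω = a} = ∅ := by
    ext ω
    simp only [Set.mem_setOf_eq, Cxor_node, Set.mem_empty_iff_false, iff_false, not_and]
    intro hz1 hz2
    have hz : ω.2 = 0 := add_eq_left.mp hz1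
    rw [hz, add_zero] at hz2
    exact hne hz2.symm
  rw [hempty]
  exact measure_empty

lemma Cid_jointBB (a a' : Fin 2) : jointBB a a' Cid (a, a) ≠ 0 := by
  show μ4 {ω : Fin 2 × Fin 2 | nodeResp edgeAB_acyclic Cid {0} (fun _ => a) 1 ω = a
      ∧ nodeResp edgeAB_acyclic Cid {0} (fun _ => a') 1 ω = a} ≠ 0
  exact μ4_ne_zero _ (0, a) (by simp [Cid_node])

lemma Cxor_jointBnat (a : Fin 2) : jointBnat a Cxor (a, a + 1) ≠ 0 := by
  show μ4 {ω : Fin 2 × Fin 2 | nodeResp edgeAB_acyclic Cxor {0} (fun _ => a) 1 ω = a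
      ∧ observed edgeAB_acyclic Cxor 1 ω = a + 1} ≠ 0
  exact μ4_ne_zero _ (a + 1, 0) (by simp [Cxor_node, Cxor_obs1])

lemma Cid_jointBnat (a : Fin 2) : jointBnat a Cid (a, a + 1) = 0 := by
  show μ4 {ω : Fin 2 × Fin 2 | nodeResp edgeAB_acyclic Cid {0} (fun _ => a) 1 ω = a
      ∧ observed edgeAB_acyclic Cid 1 ω = a + 1} = 0
  have hempty : {ω : Fin 2 × Fin 2 | nodeResp edgeAB_acyclic Cid {0} (fun _ => a) 1 ω = a
      ∧ observed edgeAB_acyclic Cid 1 ω = a + 1} = ∅ := by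
    ext ω
    simp only [Set.mem_setOf_eq, Cid_node, Cid_obs1, Set.mem_empty_iff_false, iff_false,
      not_and]
    intro hz1 hz2
    rw [hz1] at hz2
    have hne2 : ∀ b : Fin 2, b ≠ b + 1 := by decide
    exact hne2 a hz2
  rw [hempty]
  exact measure_empty


/-- for the graph `A → B` with binary state spaces and `a ≠ a'`, neither
`p(B(a), B(a'))` nor `p(B(a), B)` is identified from `p(A, B)` under the multiple worlds
model: there are MWM structures with the same observed distribution of `(A, B)` but
different joint distributions of these pairs. -/
theorem cross_world_non_identification (a a' : Fin 2) (hne : a ≠ a') :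
    (∃ C₁ C₂ : CausalStructure (Fin 2) edgeAB (fun _ => Fin 2),
      MWM C₁ ∧ MWM C₂ ∧ obsDist edgeAB_acyclic C₁ = obsDist edgeAB_acyclic C₂ ∧
      jointBB a a' C₁ ≠ jointBB a a' C₂) ∧
    (∃ C₁ C₂ : CausalStructure (Fin 2) edgeAB (fun _ => Fin 2),
      MWM C₁ ∧ MWM C₂ ∧ obsDist edgeAB_acyclic C₁ = obsDist edgeAB_acyclic C₂ ∧
      jointBnat a C₁ ≠ jointBnat a C₂) ∧
    ¬ (∀ C₁ C₂ : CausalStructure (Fin 2) edgeAB (fun _ => Fin 2), MWM C₁ → MWM C₂ →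
        obsDist edgeAB_acyclic C₁ = obsDist edgeAB_acyclic C₂ →
        jointBB a a' C₁ = jointBB a a' C₂) ∧
    ¬ (∀ C₁ C₂ : CausalStructure (Fin 2) edgeAB (fun _ => Fin 2), MWM C₁ → MWM C₂ →
        obsDist edgeAB_acyclic C₁ = obsDist edgeAB_acyclic C₂ →
        jointBnat a C₁ = jointBnat a C₂) := by
  have hBB : jointBB a a' Cxor ≠ jointBB a a' Cid := by
    intro h
    have h2 := congrFun h (a, a)
    rw [Cxor_jointBB a a' hne] at h2
    exact Cid_jointBB a a' h2.symm
  have hBn : jointBnat a Cxor ≠ jointBnat a Cid := by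
    intro h
    have h2 := congrFun h (a, a + 1)
    rw [Cid_jointBnat a] at h2
    exact Cxor_jointBnat a h2
  exact ⟨⟨Cxor, Cid, Cxor_MWM, Cid_MWM, obs_dist_eq, hBB⟩,
    ⟨Cxor, Cid, Cxor_MWM, Cid_MWM, obs_dist_eq, hBn⟩,
    fun h => hBB (h _ _ Cxor_MWM Cid_MWM obs_dist_eq),
    fun h => hBn (h _ _ Cxor_MWM Cid_MWM obs_dist_eq)⟩


end CausalHierarchy
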